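/- Let M be a von Neumann algebra on a complex Hilbert space H and let a ∈ M satisfy 0 ≤ a ≤ 1 (in the Loewner order on bounded operators). Then there exists a smallest projection above a in M: a projection e ∈ M with a ≤ e such that every projection q ∈ M with a ≤ q satisfies e ≤ q. -/

import Mathlib

open scoped InnerProductSpace

/-- For an element `a` of a von Neumann algebra `M` with `0 ≤ a ≤ 1` (Loewner order on
bounded operators), there is a smallest projection in `M` above `a`. -/
theorem stmt_13 {H : Type*} [NormedAddCommGroup H] [InnerProductSpace ℂ H] [CompleteSpace H]
    (M : VonNeumannAlgebra H) (a : H →L[ℂ] H) (haM : a ∈ M)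
    (h0 : 0 ≤ a) (h1 : a ≤ 1) :
    ∃ e : H →L[ℂ] H, e ∈ M ∧ IsSelfAdjoint e ∧ e * e = e ∧ a ≤ e ∧
      ∀ q : H →L[ℂ] H, q ∈ M → IsSelfAdjoint q → q * q = q → a ≤ q → e ≤ q := by
  have hapos : a.IsPositive := (ContinuousLinearMap.nonneg_iff_isPositive a).mp h0
  have hasa : IsSelfAdjoint a := hapos.isSelfAdjoint
  set K : Submodule ℂ H := (LinearMap.range (a : H →ₗ[ℂ] H)).topologicalClosure with hK
  haveI : CompleteSpace K := (LinearMap.range (a : H →ₗ[ℂ] H)).isClosed_topologicalClosure.completeSpace_coe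
  set e : H →L[ℂ] H := K.subtypeL ∘L K.orthogonalProjectionOnto with he
  have hesa : IsSelfAdjoint e := isSelfAdjoint_starProjection K
  -- basic facts about e
  have hmemK : ∀ x : H, e x ∈ K := fun x => (K.orthogonalProjectionOnto x).2
  have heself : ∀ y ∈ K, e y = y := fun y hy => Submodule.starProjection_eq_self_iff.mpr hy
  have hranK : ∀ x : H, a x ∈ K := fun x =>
    Submodule.le_topologicalClosure _ (LinearMap.mem_range_self _ x)
  have hsub : ∀ x : H, x - e x ∈ Kᗮ := fun x => Submodule.sub_starProjection_mem_orthogonal x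
  have hezero : ∀ z ∈ Kᗮ, e z = 0 := by
    intro z hz
    have := Submodule.orthogonalProjectionOnto_apply_of_mem_orthogonal hz
    simp [he, this]
  have hidem : e * e = e := by
    ext x
    exact heself (e x) (hmemK x)
  -- a kills the orthogonal complement of K
  have hazero : ∀ z ∈ Kᗮ, a z = 0 := by
    intro z hz
    have h1' : ⟪(a (a z) : H), z⟫_ℂ = 0 :=
      (Submodule.mem_orthogonal K z).mp hz (a (a z)) (hranK (a z))
    have h2' : ⟪(a z : H), a z⟫_ℂ = 0 := by
      calc ⟪(a z : H), a z⟫_ℂ = ⟪(ContinuousLinearMap.adjoint a) (a z), z⟫_ℂ := by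
            rw [ContinuousLinearMap.adjoint_inner_left]
        _ = ⟪(a (a z) : H), z⟫_ℂ := by rw [hasa.adjoint_eq]
        _ = 0 := h1'
    exact inner_self_eq_zero.mp h2'
  refine ⟨e, ?_, hesa, hidem, ?_, ?_⟩
  · -- membership: e commutes with the commutant of M
    rw [← SetLike.mem_coe, ← M.centralizer_centralizer]
    intro T hT
    have hTa : a * T = T * a := hT a haM
    have hTsa : ∀ m ∈ M, m * star T = star T * m := by
      intro m hm
      have h' := hT (star m) (star_mem hm)
      calc m * star T = star (T * star m) := by simp [star_mul]
        _ = star (star m * T) := by rw [h']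
        _ = star T * m := by simp [star_mul]
    have hTstar_a : a * star T = star T * a := hTsa a haM
    -- T and star T preserve K
    have hmaps : ∀ S : H →L[ℂ] H, a * S = S * a → ∀ y ∈ K, S y ∈ K := by
      intro S hS y hy
      have hy' : y ∈ closure ((LinearMap.range (a : H →ₗ[ℂ] H) : Submodule ℂ H) : Set H) := hy
      have hmem : S y ∈ closure ((LinearMap.range (a : H →ₗ[ℂ] H) : Submodule ℂ H) : Set H) := by
        refine map_mem_closure S.continuous hy' ?_
        rintro _ ⟨x, rfl⟩
        refine ⟨S x, ?_⟩
        have := congrArg (fun f : H →L[ℂ] H => f x) hS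
        simpa using this
      exact hmem
    have hTK : ∀ y ∈ K, T y ∈ K := hmaps T hTa
    have hTstarK : ∀ y ∈ K, star T y ∈ K := hmaps (star T) hTstar_a
    have hTperp : ∀ z ∈ Kᗮ, T z ∈ Kᗮ := by
      intro z hz
      rw [Submodule.mem_orthogonal]
      intro u hu
      have h'' : ⟪((ContinuousLinearMap.adjoint T) u : H), z⟫_ℂ = ⟪u, T z⟫_ℂ :=
        ContinuousLinearMap.adjoint_inner_left T z u
      rw [← h'']
      refine (Submodule.mem_orthogonal K z).mp hz _ ?_
      have hadj : (ContinuousLinearMap.adjoint T) u = star T u := rfl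
      rw [hadj]; exact hTstarK u hu
    ext x
    have hx : x = e x + (x - e x) := by abel
    have h1x : T (e x) ∈ K := hTK _ (hmemK x)
    have h2x : T (x - e x) ∈ Kᗮ := hTperp _ (hsub x)
    calc (T * e) x = T (e x) := rfl
      _ = e (T (e x)) + e (T (x - e x)) := by
          rw [heself _ h1x, hezero _ h2x, add_zero]
      _ = e (T (e x) + T (x - e x)) := by rw [map_add]
      _ = e (T x) := by rw [← map_add, ← hx]
      _ = (e * T) x := rfl
  · -- a ≤ e
    rw [ContinuousLinearMap.le_def]
    refine ⟨(hesa.sub hasa).isSymmetric, ?_⟩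
    intro x
    rw [ContinuousLinearMap.reApplyInnerSelf_apply]
    have hz := hsub x
    have hax : a x = a (e x) := by
      have h' : a x - a (e x) = 0 := by rw [← map_sub]; exact hazero _ hz
      exact sub_eq_zero.mp h'
    have hinner1 : ⟪(e x : H), x⟫_ℂ = ⟪(e x : H), e x⟫_ℂ := by
      have h' : ⟪(e x : H), x - e x⟫_ℂ = 0 :=
        Submodule.inner_right_of_mem_orthogonal (hmemK x) hz
      calc ⟪(e x : H), x⟫_ℂ = ⟪(e x : H), e x + (x - e x)⟫_ℂ := by rw [show e x + (x - e x) = x from by abel]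
        _ = ⟪(e x : H), e x⟫_ℂ + ⟪(e x : H), x - e x⟫_ℂ := inner_add_right _ _ _
        _ = ⟪(e x : H), e x⟫_ℂ := by rw [h', add_zero]
    have hinner2 : ⟪(a x : H), x⟫_ℂ = ⟪(a (e x) : H), e x⟫_ℂ := by
      have h' : ⟪(a (e x) : H), x - e x⟫_ℂ = 0 :=
        Submodule.inner_right_of_mem_orthogonal (hranK (e x)) hz
      calc ⟪(a x : H), x⟫_ℂ = ⟪(a (e x) : H), e x + (x - e x)⟫_ℂ := by
            rw [hax, show e x + (x - e x) = x from by abel]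
        _ = ⟪(a (e x) : H), e x⟫_ℂ + ⟪(a (e x) : H), x - e x⟫_ℂ := inner_add_right _ _ _
        _ = ⟪(a (e x) : H), e x⟫_ℂ := by rw [h', add_zero]
    have hle : (1 - a).IsPositive := (ContinuousLinearMap.le_def a 1).mp h1
    have h1e := hle.2 (e x)
    rw [ContinuousLinearMap.reApplyInnerSelf_apply] at h1e
    have hexp : ((1 - a : H →L[ℂ] H) (e x)) = e x - a (e x) := by simp
    rw [hexp, inner_sub_left, map_sub] at h1e
    have hgoal : ((e - a : H →L[ℂ] H) x) = e x - a x := by simp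
    rw [hgoal, inner_sub_left, map_sub, hinner1, hinner2]
    linarith
  · -- minimality
    intro q hqM hqsa hqidem haq
    have hposqa : (q - a).IsPositive := (ContinuousLinearMap.le_def a q).mp haq
    set b : H →L[ℂ] H := CFC.sqrt a with hb
    have hbb : b * b = a := CFC.sqrt_mul_sqrt_self a h0
    have hbpos : (0 : H →L[ℂ] H) ≤ b := CFC.sqrt_nonneg (a := a)
    have hbsa : IsSelfAdjoint b :=
      ((ContinuousLinearMap.nonneg_iff_isPositive b).mp hbpos).isSelfAdjoint
    -- a kills the kernel of q
    have haqz : ∀ z : H, q z = 0 → a z = 0 := by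
      intro z hqz
      have h' := hposqa.2 z
      rw [ContinuousLinearMap.reApplyInnerSelf_apply] at h'
      have hqa : ((q - a : H →L[ℂ] H) z) = -(a z) := by simp [hqz]
      rw [hqa, inner_neg_left, map_neg] at h'
      have haz : ⟪(a z : H), z⟫_ℂ = ⟪(b z : H), b z⟫_ℂ := by
        have hzz : a z = b (b z) := by
          have := congrArg (fun f : H →L[ℂ] H => f z) hbb
          simpa using this.symm
        calc ⟪(a z : H), z⟫_ℂ = ⟪(b (b z) : H), z⟫_ℂ := by rw [hzz]
          _ = ⟪((ContinuousLinearMap.adjoint b) (b z) : H), z⟫_ℂ := by rw [hbsa.adjoint_eq]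
          _ = ⟪(b z : H), b z⟫_ℂ := ContinuousLinearMap.adjoint_inner_left b _ _
      rw [haz] at h'
      have hb0 : b z = 0 := by
        have hnn := inner_self_nonneg (𝕜 := ℂ) (x := b z)
        have hre : RCLike.re ⟪(b z : H), b z⟫_ℂ = 0 := le_antisymm (by linarith) hnn
        rw [inner_self_eq_norm_sq] at hre
        exact norm_eq_zero.mp ((pow_eq_zero_iff two_ne_zero).mp hre)
      have : a z = b (b z) := by
        have := congrArg (fun f : H →L[ℂ] H => f z) hbb
        simpa using this.symm
      rw [this, hb0, map_zero]
    -- hence a ∘ (1 - q) = 0 and q ∘ a = a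
    have haq1 : ∀ x : H, a x = a (q x) := by
      intro x
      have hq0 : q (x - q x) = 0 := by
        have := congrArg (fun f : H →L[ℂ] H => f x) hqidem
        simp only [ContinuousLinearMap.mul_apply] at this
        simp [map_sub, this]
      have := haqz _ hq0
      rw [map_sub, sub_eq_zero] at this
      exact this
    have hqa : ∀ x : H, q (a x) = a x := by
      intro x
      have hmul : a * (1 - q) = 0 := by
        ext y
        simp only [ContinuousLinearMap.mul_apply, ContinuousLinearMap.sub_apply,
          ContinuousLinearMap.one_apply, ContinuousLinearMap.zero_apply, map_sub]
        rw [← haq1 y]; simp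
      have hmul' : (1 - q) * a = 0 := by
        have := congrArg star hmul
        rwa [star_mul, star_zero, star_sub, star_one, hqsa.star_eq, hasa.star_eq] at this
      have := congrArg (fun f : H →L[ℂ] H => f x) hmul'
      simp only [ContinuousLinearMap.mul_apply, ContinuousLinearMap.sub_apply,
        ContinuousLinearMap.one_apply, ContinuousLinearMap.zero_apply] at this
      exact (sub_eq_zero.mp this).symm
    have hqK : ∀ y ∈ K, q y = y := by
      intro y hy
      have hy' : y ∈ closure ((LinearMap.range (a : H →ₗ[ℂ] H) : Submodule ℂ H) : Set H) := hy
      have hcl : IsClosed {v : H | q v = v} := isClosed_eq q.continuous continuous_id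
      have hsubset : ((LinearMap.range (a : H →ₗ[ℂ] H) : Submodule ℂ H) : Set H) ⊆ {v | q v = v} := by
        rintro _ ⟨x, rfl⟩
        exact hqa x
      exact closure_minimal hsubset hcl hy'
    have hqe : q * e = e := by
      ext x
      exact hqK _ (hmemK x)
    have heq : e * q = e := by
      have := congrArg star hqe
      rwa [star_mul, hqsa.star_eq, hesa.star_eq] at this
    rw [ContinuousLinearMap.le_def]
    have hssa : IsSelfAdjoint (q - e) := hqsa.sub hesa
    refine ⟨hssa.isSymmetric, ?_⟩
    intro x
    rw [ContinuousLinearMap.reApplyInnerSelf_apply]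
    have hsidem : (q - e) * (q - e) = q - e := by
      rw [sub_mul, mul_sub, mul_sub, hqidem, hqe, heq, hidem]
      abel
    have hfix : (q - e) x = (q - e) ((q - e) x) := by
      have := congrArg (fun f : H →L[ℂ] H => f x) hsidem
      simpa using this.symm
    have hsymm := ContinuousLinearMap.isSelfAdjoint_iff_isSymmetric.mp hssa
    have h2 : ⟪((q - e) x : H), x⟫_ℂ = ⟪((q - e) x : H), (q - e) x⟫_ℂ := by
      conv_lhs => rw [hfix]
      exact hsymm ((q - e) x) x
    rw [h2]
    exact inner_self_nonneg
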